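/- If G and H both admit interval colorings and H is an r-regular graph, then the strong product G ⊠ H admits an interval coloring; moreover w(G ⊠ H) ≤ w(G)·(r+1) + r and W(G ⊠ H) ≥ W(G)·(r+1) + r. -/

import Mathlib

open SimpleGraph

/-- `c` is an interval `t`-coloring of `G`: edges get colors in `{1,…,t}`, every color
`1,…,t` is used, adjacent edges get distinct colors, and the set of colors of edges
incident to any vertex is an interval of integers. -/
def IsIntervalColoring {V : Type*} (G : SimpleGraph V) (t : ℕ) (c : Sym2 V → ℕ) : Prop :=
  (∀ e ∈ G.edgeSet, 1 ≤ c e ∧ c e ≤ t) ∧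
  (∀ i, 1 ≤ i → i ≤ t → ∃ e ∈ G.edgeSet, c e = i) ∧
  (∀ v w₁ w₂, G.Adj v w₁ → G.Adj v w₂ → w₁ ≠ w₂ → c s(v, w₁) ≠ c s(v, w₂)) ∧
  (∀ v i j k, (∃ w, G.Adj v w ∧ c s(v, w) = i) → (∃ w, G.Adj v w ∧ c s(v, w) = k) →
    i ≤ j → j ≤ k → ∃ w, G.Adj v w ∧ c s(v, w) = j)

/-- `G` has an interval `t`-coloring. -/
def HasIntervalColoring {V : Type*} (G : SimpleGraph V) (t : ℕ) : Prop :=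
  ∃ c : Sym2 V → ℕ, IsIntervalColoring G t c

/-- `G` is interval colorable (`G ∈ 𝔑`). -/
def IntervalColorable {V : Type*} (G : SimpleGraph V) : Prop :=
  ∃ t : ℕ, 1 ≤ t ∧ HasIntervalColoring G t

/-- `w G`: the least number of colors in an interval coloring of `G`. -/
noncomputable def wNum {V : Type*} (G : SimpleGraph V) : ℕ :=
  sInf {t | HasIntervalColoring G t}

/-- `W G`: the greatest number of colors in an interval coloring of `G`. -/
noncomputable def WNum {V : Type*} (G : SimpleGraph V) : ℕ :=
  sSup {t | HasIntervalColoring G t}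

/-- `G` is `r`-regular: every vertex has exactly `r` neighbors. -/
def IsRegularGraph {V : Type*} (G : SimpleGraph V) (r : ℕ) : Prop :=
  ∀ v : V, (G.neighborSet v).ncard = r

/-- `c` is a proper edge coloring of `G` using colors `0,…,k-1`. -/
def IsProperEdgeColoring {V : Type*} (G : SimpleGraph V) (k : ℕ) (c : Sym2 V → ℕ) : Prop :=
  (∀ e ∈ G.edgeSet, c e < k) ∧
  (∀ v w₁ w₂, G.Adj v w₁ → G.Adj v w₂ → w₁ ≠ w₂ → c s(v, w₁) ≠ c s(v, w₂))

/-- The chromatic index `χ'(G)`. -/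
noncomputable def edgeChromaticNumber {V : Type*} (G : SimpleGraph V) : ℕ :=
  sInf {k | ∃ c : Sym2 V → ℕ, IsProperEdgeColoring G k c}

/-- `G` is 1-factorable: its edge set decomposes into perfect matchings. -/
def IsOneFactorable {V : Type*} (G : SimpleGraph V) : Prop :=
  ∃ (n : ℕ) (f : Fin n → SimpleGraph.Subgraph G),
    (∀ i, (f i).IsPerfectMatching) ∧
    (∀ e ∈ G.edgeSet, ∃! i, e ∈ (f i).edgeSet)

/-- The tensor (direct) product `G × H`. -/
def tensorProd {α β : Type*} (G : SimpleGraph α) (H : SimpleGraph β) :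
    SimpleGraph (α × β) where
  Adj p q := G.Adj p.1 q.1 ∧ H.Adj p.2 q.2
  symm := ⟨fun p q ⟨h₁, h₂⟩ => ⟨h₁.symm, h₂.symm⟩⟩
  loopless := ⟨fun p h => G.irrefl h.1⟩

/-- The strong tensor (semistrong) product `G ⊗ H`. -/
def strongTensorProd {α β : Type*} (G : SimpleGraph α) (H : SimpleGraph β) :
    SimpleGraph (α × β) where
  Adj p q := (G.Adj p.1 q.1 ∧ H.Adj p.2 q.2) ∨ (p.2 = q.2 ∧ G.Adj p.1 q.1)
  symm := ⟨fun p q h => by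
    rcases h with ⟨h₁, h₂⟩ | ⟨h₁, h₂⟩
    · exact Or.inl ⟨h₁.symm, h₂.symm⟩
    · exact Or.inr ⟨h₁.symm, h₂.symm⟩⟩
  loopless := ⟨fun p h => by
    rcases h with ⟨h₁, _⟩ | ⟨_, h₁⟩ <;> exact G.irrefl h₁⟩

/-- The strong product `G ⊠ H`. -/
def strongProd {α β : Type*} (G : SimpleGraph α) (H : SimpleGraph β) :
    SimpleGraph (α × β) where
  Adj p q := (G.Adj p.1 q.1 ∧ H.Adj p.2 q.2) ∨ (p.1 = q.1 ∧ H.Adj p.2 q.2) ∨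
    (p.2 = q.2 ∧ G.Adj p.1 q.1)
  symm := ⟨fun p q h => by
    rcases h with ⟨h₁, h₂⟩ | ⟨h₁, h₂⟩ | ⟨h₁, h₂⟩
    · exact Or.inl ⟨h₁.symm, h₂.symm⟩
    · exact Or.inr (Or.inl ⟨h₁.symm, h₂.symm⟩)
    · exact Or.inr (Or.inr ⟨h₁.symm, h₂.symm⟩)⟩
  loopless := ⟨fun p h => by
    rcases h with ⟨h₁, _⟩ | ⟨_, h₂⟩ | ⟨_, h₁⟩
    · exact G.irrefl h₁
    · exact H.irrefl h₂
    · exact G.irrefl h₁⟩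

/-- The lexicographic product (composition) `G[H]`. -/
def lexProd {α β : Type*} (G : SimpleGraph α) (H : SimpleGraph β) :
    SimpleGraph (α × β) where
  Adj p q := G.Adj p.1 q.1 ∨ (p.1 = q.1 ∧ H.Adj p.2 q.2)
  symm := ⟨fun p q h => by
    rcases h with h₁ | ⟨h₁, h₂⟩
    · exact Or.inl h₁.symm
    · exact Or.inr ⟨h₁.symm, h₂.symm⟩⟩
  loopless := ⟨fun p h => by
    rcases h with h₁ | ⟨_, h₂⟩
    · exact G.irrefl h₁
    · exact H.irrefl h₂⟩

theorem SP_blk_inj {K X Y s1 s2 : ℕ} (h1 : s1 < K) (h2 : s2 < K)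
    (h : X * K + 1 + s1 = Y * K + 1 + s2) : X = Y ∧ s1 = s2 := by
  have key : ∀ a b s s' : ℕ, s < K → a < b → a * K + 1 + s < b * K + 1 + s' := by
    intro a b s s' hs hab
    have : (a + 1) * K ≤ b * K := Nat.mul_le_mul_right K hab
    nlinarith
  have hXY : X = Y := by
    rcases lt_trichotomy X Y with hlt | heq | hlt
    · exact absurd h (Nat.ne_of_lt (key X Y s1 s2 h1 hlt))
    · exact heq
    · exact absurd h.symm (Nat.ne_of_lt (key Y X s2 s1 h2 hlt))
  subst hXY
  exact ⟨rfl, by have := Nat.add_left_cancel h; omega⟩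

theorem SP_icc (S : Set ℕ) (hne : S.Nonempty) (hbd : BddAbove S)
    (hbet : ∀ i j k, i ∈ S → k ∈ S → i ≤ j → j ≤ k → j ∈ S) :
    S = Set.Icc (sInf S) (sSup S) := by
  ext j
  constructor
  · intro hj; exact ⟨Nat.sInf_le hj, le_csSup hbd hj⟩
  · rintro ⟨hj1, hj2⟩
    exact hbet _ _ _ (Nat.sInf_mem hne) (Nat.sSup_mem hne hbd) hj1 hj2

theorem SP_reg_key {B : Type*} [Fintype B] (H : SimpleGraph B) (r s : ℕ) (hr : 1 ≤ r)
    (hreg : IsRegularGraph H r) (cH : Sym2 B → ℕ) (hc : IsIntervalColoring H s cH) (x : B) :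
    (∀ j, j < r → ∃ y, H.Adj x y ∧ (cH s(x, y) - 1) % r = j) ∧
    (∀ y1 y2, H.Adj x y1 → H.Adj x y2 →
      (cH s(x, y1) - 1) % r = (cH s(x, y2) - 1) % r → y1 = y2) := by
  obtain ⟨hc1, hc2, hc3, hc4⟩ := hc
  set S : Set ℕ := {i | ∃ y, H.Adj x y ∧ cH s(x, y) = i} with hS
  have hSim : S = (fun y => cH s(x, y)) '' (H.neighborSet x) := by
    ext i
    exact ⟨fun ⟨y, h, hv⟩ => ⟨y, h, hv⟩, fun ⟨y, h, hv⟩ => ⟨y, h, hv⟩⟩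
  have hSfin : S.Finite := by
    rw [hSim]; exact (Set.toFinite _).image _
  have hinjOn : Set.InjOn (fun y => cH s(x, y)) (H.neighborSet x) := by
    intro y1 hy1 y2 hy2 hval
    by_contra hne
    exact hc3 x y1 y2 hy1 hy2 hne hval
  have hScard : S.ncard = r := by
    rw [hSim, Set.ncard_image_of_injOn hinjOn, hreg x]
  have hSne : S.Nonempty := Set.nonempty_of_ncard_ne_zero (by omega)
  have hbd : BddAbove S := hSfin.bddAbove
  have hIcc : S = Set.Icc (sInf S) (sSup S) :=
    SP_icc S hSne hbd (fun i j k hi hk hij hjk => hc4 x i j k hi hk hij hjk)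
  set m := sInf S with hm
  set M := sSup S with hM
  have hmem_m : m ∈ S := Nat.sInf_mem hSne
  have hmem_M : M ∈ S := Nat.sSup_mem hSne hbd
  have hm1 : 1 ≤ m := by
    obtain ⟨y, hy, hv⟩ := hmem_m
    have := hc1 s(x, y) (H.mem_edgeSet.2 hy)
    omega
  have hmM : m ≤ M := le_csSup hbd hmem_m
  have hMm : M + 1 = m + r := by
    have h2 : (Set.Icc m M).ncard = M + 1 - m := by
      rw [Set.ncard_eq_toFinset_card']; simp
    rw [← hIcc, hScard] at h2
    omega
  have hfinj : ∀ c1 ∈ S, ∀ c2 ∈ S, (c1 - 1) % r = (c2 - 1) % r → c1 = c2 := by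
    intro c1 hc1' c2 hc2' hmod
    rw [hIcc, Set.mem_Icc] at hc1' hc2'
    obtain ⟨ha1, ha2⟩ := hc1'
    obtain ⟨hb1, hb2⟩ := hc2'
    rcases le_total c1 c2 with hle | hle
    · have hd : r ∣ (c2 - 1) - (c1 - 1) := (Nat.modEq_iff_dvd' (by omega)).1 hmod
      have := Nat.eq_zero_of_dvd_of_lt hd (show (c2 - 1) - (c1 - 1) < r by omega)
      omega
    · have hd : r ∣ (c1 - 1) - (c2 - 1) := (Nat.modEq_iff_dvd' (by omega)).1 hmod.symm
      have := Nat.eq_zero_of_dvd_of_lt hd (show (c1 - 1) - (c2 - 1) < r by omega)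
      omega
  constructor
  · -- surjectivity
    intro j hj
    have hTsub : (fun c => (c - 1) % r) '' S ⊆ Set.Iio r := by
      rintro _ ⟨c, _, rfl⟩
      exact Nat.mod_lt _ (by omega)
    have hTcard : ((fun c => (c - 1) % r) '' S).ncard = r := by
      rw [Set.ncard_image_of_injOn (fun c1 h1 c2 h2 h => hfinj c1 h1 c2 h2 h), hScard]
    have hIio : (Set.Iio r).ncard = r := by
      rw [Set.ncard_eq_toFinset_card']; simp
    have hTeq : (fun c => (c - 1) % r) '' S = Set.Iio r :=
      Set.eq_of_subset_of_ncard_le hTsub (by omega) (Set.finite_Iio r)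
    have : j ∈ (fun c => (c - 1) % r) '' S := hTeq ▸ hj
    obtain ⟨c, hcS, hcj⟩ := this
    obtain ⟨y, hy, hv⟩ := hcS
    exact ⟨y, hy, by rw [hv]; exact hcj⟩
  · intro y1 y2 hy1 hy2 hmod
    have h1 : cH s(x, y1) ∈ S := ⟨y1, hy1, rfl⟩
    have h2 : cH s(x, y2) ∈ S := ⟨y2, hy2, rfl⟩
    have := hfinj _ h1 _ h2 hmod
    exact hinjOn hy1 hy2 this

theorem SP_mul_succ {c K r : ℕ} (hc : 1 ≤ c) (hK : K = r + 1) :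
    c * K = (c - 1) * K + 1 + r := by
  obtain ⟨d, rfl⟩ : ∃ d, c = d + 1 := ⟨c - 1, by omega⟩
  subst hK
  simp [Nat.add_sub_cancel]
  ring

open Classical in
noncomputable def SPcol {A B : Type*} (M : A → ℕ) (cG : Sym2 A → ℕ) (bH : Sym2 B → ℕ)
    (K : ℕ) : Sym2 (A × B) → ℕ :=
  Sym2.lift ⟨fun p q =>
    if p.1 = q.1 then M p.1 * K + 1 + bH s(p.2, q.2)
    else if p.2 = q.2 then cG s(p.1, q.1) * K
    else (cG s(p.1, q.1) - 1) * K + 1 + bH s(p.2, q.2), by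
  intro p q
  dsimp only
  by_cases h1 : p.1 = q.1
  · rw [if_pos h1, if_pos h1.symm, h1, Sym2.eq_swap]
  · by_cases h2 : p.2 = q.2
    · rw [if_neg h1, if_neg (show ¬q.1 = p.1 from fun h => h1 h.symm), if_pos h2,
        if_pos (show q.2 = p.2 from h2.symm), Sym2.eq_swap]
    · rw [if_neg h1, if_neg (show ¬q.1 = p.1 from fun h => h1 h.symm), if_neg h2,
        if_neg (show ¬q.2 = p.2 from fun h => h2 h.symm), Sym2.eq_swap, @Sym2.eq_swap _ p.2]⟩

theorem SPcol_eqB {A B : Type*} (M : A → ℕ) (cG : Sym2 A → ℕ) (bH : Sym2 B → ℕ) (K : ℕ)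
    (u : A) (x y : B) :
    SPcol M cG bH K s((u, x), (u, y)) = M u * K + 1 + bH s(x, y) := by
  simp [SPcol]

theorem SPcol_eqC {A B : Type*} (M : A → ℕ) (cG : Sym2 A → ℕ) (bH : Sym2 B → ℕ) (K : ℕ)
    (u v : A) (x : B) (h : u ≠ v) :
    SPcol M cG bH K s((u, x), (v, x)) = cG s(u, v) * K := by
  simp [SPcol, h]

theorem SPcol_eqA {A B : Type*} (M : A → ℕ) (cG : Sym2 A → ℕ) (bH : Sym2 B → ℕ) (K : ℕ)
    (u v : A) (x y : B) (h : u ≠ v) (h2 : x ≠ y) :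
    SPcol M cG bH K s((u, x), (v, y)) = (cG s(u, v) - 1) * K + 1 + bH s(x, y) := by
  simp [SPcol, h, h2]

theorem SP_main {A B : Type*} [Fintype A] [Fintype B] [Nonempty B]
    (G : SimpleGraph A) (H : SimpleGraph B) (r t : ℕ) (hr : 1 ≤ r) (ht : 1 ≤ t)
    (hreg : IsRegularGraph H r) (s : ℕ) (cH : Sym2 B → ℕ) (hcH : IsIntervalColoring H s cH)
    (cG : Sym2 A → ℕ) (hcG : IsIntervalColoring G t cG) :
    HasIntervalColoring (strongProd G H) (t * (r + 1) + r) := by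
  classical
  obtain ⟨hG1, hG2, hG3, hG4⟩ := hcG
  set K := r + 1 with hK
  set bH : Sym2 B → ℕ := fun e => (cH e - 1) % r with hbH
  have Hsurj : ∀ x j, j < r → ∃ y, H.Adj x y ∧ bH s(x, y) = j :=
    fun x => (SP_reg_key H r s hr hreg cH hcH x).1
  have Hinj : ∀ x y1 y2, H.Adj x y1 → H.Adj x y2 → bH s(x, y1) = bH s(x, y2) → y1 = y2 :=
    fun x => (SP_reg_key H r s hr hreg cH hcH x).2
  have HB : ∀ (e : Sym2 B), bH e < r := fun e => Nat.mod_lt _ (by omega)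
  have HBK : ∀ (e : Sym2 B), bH e < K := fun e => lt_trans (HB e) (by omega)
  -- palette data for G
  set SG : A → Set ℕ := fun u => {i | ∃ v, G.Adj u v ∧ cG s(u, v) = i} with hSG
  set af : A → ℕ := fun u => sInf (SG u) with haf
  set Mf : A → ℕ := fun u => sSup (SG u) with hMf
  have hSGbdd : ∀ u, BddAbove (SG u) := by
    intro u
    refine ⟨t, fun i hi => ?_⟩
    obtain ⟨v, hv, rfl⟩ := hi
    exact (hG1 s(u, v) (G.mem_edgeSet.2 hv)).2
  have hSGrange : ∀ u i, i ∈ SG u → 1 ≤ i ∧ i ≤ t := by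
    intro u i hi
    obtain ⟨v, hv, rfl⟩ := hi
    exact hG1 s(u, v) (G.mem_edgeSet.2 hv)
  have hMle : ∀ u, Mf u ≤ t := by
    intro u
    rcases Set.eq_empty_or_nonempty (SG u) with he | hne
    · rw [hMf]; simp only [he]; simp
    · exact csSup_le hne (fun i hi => (hSGrange u i hi).2)
  have haMem : ∀ u, (SG u).Nonempty → af u ∈ SG u := fun u h => Nat.sInf_mem h
  have hMMem : ∀ u, (SG u).Nonempty → Mf u ∈ SG u := fun u h => Nat.sSup_mem h (hSGbdd u)
  have hcla : ∀ u c, c ∈ SG u → af u ≤ c ∧ c ≤ Mf u :=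
    fun u c hc => ⟨Nat.sInf_le hc, le_csSup (hSGbdd u) hc⟩
  have haM : ∀ u, (SG u).Nonempty → af u ≤ Mf u :=
    fun u h => (hcla u (af u) (haMem u h)).2
  have hIccG : ∀ u, (SG u).Nonempty → ∀ c, af u ≤ c → c ≤ Mf u → c ∈ SG u :=
    fun u hne c h1 h2 => hG4 u (af u) c (Mf u) (haMem u hne) (hMMem u hne) h1 h2
  have haM1 : ∀ u, af u - 1 ≤ Mf u := by
    intro u
    rcases Set.eq_empty_or_nonempty (SG u) with he | hne
    · rw [haf]; simp only [he]; simp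
    · have := haM u hne; omega
  -- membership of cG-colors of actual edges
  have hmemSG : ∀ u v, G.Adj u v → cG s(u, v) ∈ SG u := fun u v hv => ⟨v, hv, rfl⟩
  -- upper/lower bounds for colors of edges at a vertex
  have Up : ∀ (u v : A) (x y : B), (strongProd G H).Adj (u, x) (v, y) →
      (af u - 1) * K + 1 ≤ SPcol Mf cG bH K s((u, x), (v, y)) ∧
      SPcol Mf cG bH K s((u, x), (v, y)) ≤ Mf u * K + r := by
    intro u v x y hadj
    rcases hadj with ⟨hGa, hHa⟩ | ⟨heq, hHa⟩ | ⟨heq, hGa⟩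
    · -- type A
      rw [SPcol_eqA Mf cG bH K u v x y hGa.ne hHa.ne]
      obtain ⟨hc1, hc2⟩ := hcla u _ (hmemSG u v hGa)
      have m1 : (af u - 1) * K ≤ (cG s(u, v) - 1) * K :=
        Nat.mul_le_mul_right K (by omega)
      have m2 : (cG s(u, v) - 1) * K + K ≤ Mf u * K := by
        have := Nat.mul_le_mul_right K (show cG s(u, v) - 1 + 1 ≤ Mf u by
          have := (hSGrange u _ (hmemSG u v hGa)).1; omega)
        linarith
      have hb := HB s(x, y)
      constructor <;> linarith
    · -- type B
      have heq' : u = v := heq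
      subst heq'
      rw [SPcol_eqB Mf cG bH K u x y]
      have m1 : (af u - 1) * K ≤ Mf u * K := Nat.mul_le_mul_right K (haM1 u)
      have hb := HB s(x, y)
      constructor <;> linarith
    · -- type C
      have heq' : x = y := heq
      subst heq'
      rw [SPcol_eqC Mf cG bH K u v x hGa.ne]
      obtain ⟨hc1, hc2⟩ := hcla u _ (hmemSG u v hGa)
      have hg1 := (hSGrange u _ (hmemSG u v hGa)).1
      have hmul : cG s(u, v) * K = (cG s(u, v) - 1) * K + 1 + r := SP_mul_succ hg1 hK
      have m1 : (af u - 1) * K ≤ (cG s(u, v) - 1) * K :=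
        Nat.mul_le_mul_right K (by omega)
      have m2 : cG s(u, v) * K ≤ Mf u * K := Nat.mul_le_mul_right K hc2
      constructor <;> linarith
  -- realizability of every color in the interval at a vertex
  have Down : ∀ (u : A) (x : B) (val : ℕ), (af u - 1) * K + 1 ≤ val → val ≤ Mf u * K + r →
      ∃ w, (strongProd G H).Adj (u, x) w ∧ SPcol Mf cG bH K s((u, x), w) = val := by
    intro u x val h1 h2
    have hv1 : 1 ≤ val := le_trans (Nat.le_add_left 1 _) h1
    rcases Set.eq_empty_or_nonempty (SG u) with he | hne
    · -- u isolated in G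
      have ha0 : af u = 0 := by rw [haf]; simp only [he]; simp
      have hM0 : Mf u = 0 := by rw [hMf]; simp only [he]; simp
      have hvr : val ≤ r := by rw [hM0] at h2; simpa using h2
      obtain ⟨y, hy, hby⟩ := Hsurj x (val - 1) (by omega)
      refine ⟨(u, y), Or.inr (Or.inl ⟨rfl, hy⟩), ?_⟩
      rw [SPcol_eqB Mf cG bH K u x y, hM0, hby]
      omega
    · have ha1 : 1 ≤ af u := (hSGrange u _ (haMem u hne)).1
      have haMu : af u ≤ Mf u := haM u hne
      have hKpos : 0 < K := by omega
      set q0 := (val - 1) / K with hq0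
      set j := (val - 1) % K with hj
      have hdm : q0 * K + j = val - 1 := by
        rw [hq0, hj, mul_comm, Nat.div_add_mod]
      have hjK : j < K := Nat.mod_lt _ hKpos
      have hvl : (af u - 1) * K ≤ val - 1 := Nat.le_pred_of_lt h1
      have hq0a : af u - 1 ≤ q0 := by
        have hdiv := Nat.div_le_div_right (c := K) hvl
        rwa [Nat.mul_div_cancel _ hKpos] at hdiv
      have hq0M : q0 ≤ Mf u := by
        have hlt : val - 1 < (Mf u + 1) * K := by
          have key : ∀ X : ℕ, val ≤ X + r → X + K = (Mf u + 1) * K → val - 1 < (Mf u + 1) * K := by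
            intro X hX hXe; omega
          exact key (Mf u * K) h2 (by ring)
        have := (Nat.div_lt_iff_lt_mul hKpos).2 hlt
        omega
      rcases Nat.lt_or_ge j r with hjr | hjr
      · rcases Nat.lt_or_ge q0 (Mf u) with hqM | hqM
        · -- cross edge (type A)
          have hcmem : q0 + 1 ∈ SG u := hIccG u hne (q0 + 1) (by omega) (by omega)
          obtain ⟨v, hv, hcv⟩ := hcmem
          obtain ⟨y, hy, hby⟩ := Hsurj x j hjr
          refine ⟨(v, y), Or.inl ⟨hv, hy⟩, ?_⟩
          rw [SPcol_eqA Mf cG bH K u v x y hv.ne hy.ne, hcv, hby]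
          simp only [Nat.add_sub_cancel]
          have key : ∀ X : ℕ, X + j = val - 1 → 1 ≤ val → X + 1 + j = val := by
            intro X hX hv'; omega
          exact key (q0 * K) hdm hv1
        · -- H-type edge (type B)
          have hq0e : q0 = Mf u := le_antisymm hq0M hqM
          obtain ⟨y, hy, hby⟩ := Hsurj x j hjr
          refine ⟨(u, y), Or.inr (Or.inl ⟨rfl, hy⟩), ?_⟩
          rw [SPcol_eqB Mf cG bH K u x y, hby, ← hq0e]
          have key : ∀ X : ℕ, X + j = val - 1 → 1 ≤ val → X + 1 + j = val := by
            intro X hX hv'; omega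
          exact key (q0 * K) hdm hv1
      · -- straight edge (type C)
        have hjr' : j = r := by omega
        have hqM : q0 < Mf u := by
          rcases Nat.lt_or_ge q0 (Mf u) with h' | h'
          · exact h'
          · exfalso
            have hq0e : q0 = Mf u := le_antisymm hq0M h'
            have key : ∀ X : ℕ, X + j = val - 1 → val ≤ X + r → j = r → 1 ≤ r → False := by
              intro X hX1 hX2 hX3 hX4; omega
            exact key (Mf u * K) (hq0e ▸ hdm) h2 hjr' hr
        have hcmem : q0 + 1 ∈ SG u := hIccG u hne (q0 + 1) (by omega) (by omega)
        obtain ⟨v, hv, hcv⟩ := hcmem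
        refine ⟨(v, x), Or.inr (Or.inr ⟨rfl, hv⟩), ?_⟩
        rw [SPcol_eqC Mf cG bH K u v x hv.ne, hcv]
        have hmul : (q0 + 1) * K = q0 * K + K := by ring
        have key : ∀ X : ℕ, X + j = val - 1 → j = r → 1 ≤ val → X + K = val := by
          intro X hX1 hX2 hv'; omega
        rw [hmul]
        exact key (q0 * K) hdm hjr' hv1
  refine ⟨SPcol Mf cG bH K, ?_, ?_, ?_, ?_⟩
  · -- bounds
    intro e he
    induction e using Sym2.ind with
    | _ p w =>
      obtain ⟨u, x⟩ := p
      obtain ⟨v, y⟩ := w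
      rw [SimpleGraph.mem_edgeSet] at he
      obtain ⟨hlo, hhi⟩ := Up u v x y he
      constructor
      · exact le_trans (Nat.le_add_left 1 _) hlo
      · have := Nat.mul_le_mul_right K (hMle u)
        have hKr : t * (r + 1) + r = t * K + r := by rw [hK]
        rw [hKr]
        linarith
  · -- every color used
    intro i hi1 hi2
    have hKpos : 0 < K := by omega
    set q0 := (i - 1) / K with hq0
    set j := (i - 1) % K with hj
    have hdm : q0 * K + j = i - 1 := by rw [hq0, hj, mul_comm, Nat.div_add_mod]
    have hjK : j < K := Nat.mod_lt _ hKpos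
    have hq0t : q0 ≤ t := by
      have hlt : i - 1 < (t + 1) * K := by
        have key : ∀ X : ℕ, i ≤ X + r → X + K = (t + 1) * K → i - 1 < (t + 1) * K := by
          intro X hX hXe; omega
        refine key (t * K) ?_ (by ring)
        have : t * (r + 1) + r = t * K + r := by rw [hK]
        omega
      have := (Nat.div_lt_iff_lt_mul hKpos).2 hlt
      omega
    set x0 : B := Classical.arbitrary B with hx0
    -- find a suitable vertex u
    have hfind : ∃ u : A, (af u - 1) * K + 1 ≤ i ∧ i ≤ Mf u * K + r := by
      rcases Nat.lt_or_ge q0 t with hqt | hqt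
      · obtain ⟨e, hee, hec⟩ := hG2 (q0 + 1) (Nat.le_add_left 1 q0) hqt
        induction e using Sym2.ind with
        | _ u v =>
          rw [SimpleGraph.mem_edgeSet] at hee
          have hmem : q0 + 1 ∈ SG u := ⟨v, hee, hec⟩
          obtain ⟨hc1, hc2⟩ := hcla u _ hmem
          refine ⟨u, ?_, ?_⟩
          · have m1 : (af u - 1) * K ≤ q0 * K :=
              Nat.mul_le_mul_right K (Nat.sub_le_of_le_add hc1)
            have key : ∀ X Y : ℕ, X ≤ Y → Y + j = i - 1 → 1 ≤ i → X + 1 ≤ i := by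
              intro X Y h' h'' h'''; omega
            exact key _ _ m1 hdm hi1
          · have m2 : q0 * K + K ≤ Mf u * K := by
              have := Nat.mul_le_mul_right K (show q0 + 1 ≤ Mf u from hc2)
              linarith
            have key : ∀ X Y : ℕ, X + j = i - 1 → X + K ≤ Y → j < K → 1 ≤ i → i ≤ Y + r := by
              intro X Y h' h'' h''' h''''; omega
            exact key (q0 * K) (Mf u * K) hdm m2 hjK hi1
      · have hq0e : q0 = t := le_antisymm hq0t hqt
        obtain ⟨e, hee, hec⟩ := hG2 t (by omega) (by omega)
        induction e using Sym2.ind with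
        | _ u v =>
          rw [SimpleGraph.mem_edgeSet] at hee
          have hmem : t ∈ SG u := ⟨v, hee, hec⟩
          obtain ⟨hc1, hc2⟩ := hcla u _ hmem
          have hMt : Mf u = t := le_antisymm (hMle u) hc2
          refine ⟨u, ?_, ?_⟩
          · have m1 : (af u - 1) * K ≤ q0 * K :=
              Nat.mul_le_mul_right K (by
                rw [hq0e]
                exact Nat.sub_le_of_le_add (le_trans hc1 (Nat.le_succ t)))
            have key : ∀ X Y : ℕ, X ≤ Y → Y + j = i - 1 → 1 ≤ i → X + 1 ≤ i := by
              intro X Y h' h'' h'''; omega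
            exact key _ _ m1 hdm hi1
          · rw [hMt]
            exact hi2
    obtain ⟨u, hu1, hu2⟩ := hfind
    obtain ⟨w, hw, hwc⟩ := Down u x0 i hu1 hu2
    exact ⟨s((u, x0), w), (strongProd G H).mem_edgeSet.2 hw, hwc⟩
  · -- properness
    rintro ⟨u, x⟩ ⟨v1, y1⟩ ⟨v2, y2⟩ h1 h2 hne heq
    -- express both colors in block/slot form
    have getform : ∀ (v : A) (y : B), (strongProd G H).Adj (u, x) (v, y) →
        ∃ blk slot, slot < K ∧ SPcol Mf cG bH K s((u, x), (v, y)) = blk * K + 1 + slot ∧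
          ((u = v ∧ blk = Mf u ∧ slot = bH s(x, y)) ∨
           (G.Adj u v ∧ x = y ∧ blk = cG s(u, v) - 1 ∧ slot = r) ∨
           (G.Adj u v ∧ H.Adj x y ∧ blk = cG s(u, v) - 1 ∧ slot = bH s(x, y))) := by
      intro v y hadj
      rcases hadj with ⟨hGa, hHa⟩ | ⟨hq, hHa⟩ | ⟨hq, hGa⟩
      · refine ⟨cG s(u, v) - 1, bH s(x, y), HBK _, ?_, Or.inr (Or.inr ⟨hGa, hHa, rfl, rfl⟩)⟩
        rw [SPcol_eqA Mf cG bH K u v x y hGa.ne hHa.ne]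
      · have hq' : u = v := hq
        subst hq'
        refine ⟨Mf u, bH s(x, y), HBK _, ?_, Or.inl ⟨rfl, rfl, rfl⟩⟩
        rw [SPcol_eqB Mf cG bH K u x y]
      · have hq' : x = y := hq
        subst hq'
        refine ⟨cG s(u, v) - 1, r, by omega, ?_, Or.inr (Or.inl ⟨hGa, rfl, rfl, rfl⟩)⟩
        rw [SPcol_eqC Mf cG bH K u v x hGa.ne]
        exact SP_mul_succ (hSGrange u _ (hmemSG u v hGa)).1 hK
    obtain ⟨b1, s1, hs1, he1, hc1⟩ := getform v1 y1 h1
    obtain ⟨b2, s2, hs2, he2, hc2⟩ := getform v2 y2 h2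
    rw [he1, he2] at heq
    obtain ⟨hb, hs⟩ := SP_blk_inj hs1 hs2 heq
    rcases hc1 with ⟨hu1, hb1, hs1'⟩ | ⟨hg1, hx1, hb1, hs1'⟩ | ⟨hg1, hh1, hb1, hs1'⟩ <;>
      rcases hc2 with ⟨hu2, hb2, hs2'⟩ | ⟨hg2, hx2, hb2, hs2'⟩ | ⟨hg2, hh2, hb2, hs2'⟩
    · -- B/B
      have hy : y1 = y2 := by
        apply Hinj x y1 y2 ?_ ?_ (by rw [← hs1', ← hs2', hs])
        · rcases h1 with ⟨hGa, hHa⟩ | ⟨_, hHa⟩ | ⟨_, hGa⟩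
          · exact absurd rfl (hu1 ▸ hGa.ne)
          · exact hHa
          · exact absurd rfl (hu1 ▸ hGa.ne)
        · rcases h2 with ⟨hGa, hHa⟩ | ⟨_, hHa⟩ | ⟨_, hGa⟩
          · exact absurd rfl (hu2 ▸ hGa.ne)
          · exact hHa
          · exact absurd rfl (hu2 ▸ hGa.ne)
      exact hne (by rw [← hu1, ← hu2, hy])
    · -- B/C : slot r vs bH < r
      have := HB s(x, y1)
      omega
    · -- B/A : block Mf u vs cG - 1 < Mf u
      obtain ⟨hcl, hcu⟩ := hcla u _ (hmemSG u v2 hg2)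
      have hg1' := (hSGrange u _ (hmemSG u v2 hg2)).1
      omega
    · -- C/B
      have := HB s(x, y2)
      omega
    · -- C/C
      subst hx1; subst hx2
      have hcc : cG s(u, v1) = cG s(u, v2) := by
        have e1 := (hSGrange u _ (hmemSG u v1 hg1)).1
        have e2 := (hSGrange u _ (hmemSG u v2 hg2)).1
        omega
      have hvv : v1 ≠ v2 := fun h => hne (by rw [h])
      exact hG3 u v1 v2 hg1 hg2 hvv hcc
    · -- C/A : slot r vs bH < r
      have := HB s(x, y2)
      omega
    · -- A/B
      obtain ⟨hcl, hcu⟩ := hcla u _ (hmemSG u v1 hg1)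
      have hg1' := (hSGrange u _ (hmemSG u v1 hg1)).1
      omega
    · -- A/C
      have := HB s(x, y1)
      omega
    · -- A/A
      have hcc : cG s(u, v1) = cG s(u, v2) := by
        have e1 := (hSGrange u _ (hmemSG u v1 hg1)).1
        have e2 := (hSGrange u _ (hmemSG u v2 hg2)).1
        omega
      have hvv : v1 = v2 := by
        by_contra hvv
        exact hG3 u v1 v2 hg1 hg2 hvv hcc
      subst hvv
      have hy : y1 = y2 := Hinj x y1 y2 hh1 hh2 (by rw [← hs1', ← hs2', hs])
      exact hne (by rw [hy])
  · -- interval property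
    rintro ⟨u, x⟩ i j k hi hk hij hjk
    obtain ⟨w1, hw1, hwc1⟩ := hi
    obtain ⟨w2, hw2, hwc2⟩ := hk
    obtain ⟨v1, y1⟩ := w1
    obtain ⟨v2, y2⟩ := w2
    have U1 := Up u v1 x y1 hw1
    have U2 := Up u v2 x y2 hw2
    rw [hwc1] at U1
    rw [hwc2] at U2
    obtain ⟨w, hw, hwc⟩ := Down u x j (le_trans U1.1 hij) (le_trans hjk U2.2)
    exact ⟨w, hw, hwc⟩

theorem SP_bdd {V : Type*} [Fintype V] (G : SimpleGraph V) :
    BddAbove {t | HasIntervalColoring G t} := by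
  classical
  refine ⟨Nat.card G.edgeSet, fun t ht => ?_⟩
  obtain ⟨c, hc1, hc2, _, _⟩ := ht
  have hch : ∀ i : Fin t, ∃ e, e ∈ G.edgeSet ∧ c e = i.1 + 1 := by
    intro i
    obtain ⟨e, he, hce⟩ := hc2 (i.1 + 1) (by omega) (by omega)
    exact ⟨e, he, hce⟩
  choose f hf1 hf2 using hch
  have hinj : Function.Injective (fun i : Fin t => (⟨f i, hf1 i⟩ : G.edgeSet)) := by
    intro i1 i2 h
    have hfe : f i1 = f i2 := congrArg Subtype.val h
    have h1 := hf2 i1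
    have h2 := hf2 i2
    rw [hfe] at h1
    rw [h2] at h1
    exact Fin.ext (by omega)
  calc t = Nat.card (Fin t) := by simp
    _ ≤ Nat.card G.edgeSet := Nat.card_le_card_of_injective _ hinj

theorem SP_has_edge {V : Type*} (G : SimpleGraph V) (h : IntervalColorable G) :
    ∃ u v, G.Adj u v := by
  obtain ⟨t, ht, c, hc1, hc2, _, _⟩ := h
  obtain ⟨e, he, _⟩ := hc2 1 le_rfl ht
  induction e using Sym2.ind with
  | _ u v => exact ⟨u, v, G.mem_edgeSet.1 he⟩

theorem SP_zero_notin {V : Type*} (G : SimpleGraph V) (h : ∃ u v, G.Adj u v) :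
    ¬ HasIntervalColoring G 0 := by
  rintro ⟨c, hc1, _, _, _⟩
  obtain ⟨u, v, huv⟩ := h
  have := hc1 s(u, v) (G.mem_edgeSet.2 huv)
  omega

/-- If `G, H ∈ 𝔑` and `H` is `r`-regular, then `G ⊠ H ∈ 𝔑`; moreover
`w(G ⊠ H) ≤ w(G)·(r+1) + r` and `W(G ⊠ H) ≥ W(G)·(r+1) + r`. -/
theorem strongProd_interval_colorable {α β : Type*} [Fintype α] [Fintype β]
    (G : SimpleGraph α) (H : SimpleGraph β) (r : ℕ)
    (hG : IntervalColorable G) (hH : IntervalColorable H)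
    (hreg : IsRegularGraph H r) :
    IntervalColorable (strongProd G H) ∧
    wNum (strongProd G H) ≤ wNum G * (r + 1) + r ∧
    WNum (strongProd G H) ≥ WNum G * (r + 1) + r := by
  classical
  obtain ⟨x, y, hxy⟩ := SP_has_edge H hH
  haveI : Nonempty β := ⟨x⟩
  have hr : 1 ≤ r := by
    have h1 := hreg x
    have h2 : 0 < (H.neighborSet x).ncard := by
      rw [Set.ncard_pos (Set.toFinite _)]
      exact ⟨y, hxy⟩
    omega
  obtain ⟨s, hs, cH, hcH⟩ := hH
  have hGne : {t | HasIntervalColoring G t}.Nonempty := by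
    obtain ⟨t, _, hc⟩ := hG
    exact ⟨t, hc⟩
  have hGedge := SP_has_edge G hG
  have hwmem : HasIntervalColoring G (wNum G) := Nat.sInf_mem hGne
  have hw1 : 1 ≤ wNum G := by
    rcases Nat.eq_zero_or_pos (wNum G) with h0 | h
    · exact absurd (h0 ▸ hwmem) (SP_zero_notin G hGedge)
    · exact h
  have hWmem : HasIntervalColoring G (WNum G) := Nat.sSup_mem hGne (SP_bdd G)
  have hW1 : 1 ≤ WNum G := by
    rcases Nat.eq_zero_or_pos (WNum G) with h0 | h
    · exact absurd (h0 ▸ hWmem) (SP_zero_notin G hGedge)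
    · exact h
  obtain ⟨cGw, hcGw⟩ := hwmem
  obtain ⟨cGW, hcGW⟩ := hWmem
  have main_w := SP_main G H r (wNum G) hr hw1 hreg s cH hcH cGw hcGw
  have main_W := SP_main G H r (WNum G) hr hW1 hreg s cH hcH cGW hcGW
  refine ⟨⟨wNum G * (r + 1) + r, by omega, main_w⟩, Nat.sInf_le main_w,
    le_csSup (SP_bdd (strongProd G H)) main_W⟩
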